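/- (Faà di Bruno's formula in Bell polynomial form.) Let m ≥ 1 be an integer and let f, g : ℝ → ℝ be m-times continuously differentiable. Then for every x ∈ ℝ, the m-th derivative of the composition satisfies dᵐ/dxᵐ f(g(x)) = Σ_{k=0}^{m} f^{(k)}(g(x)) · B_{m,k}( g'(x), g''(x), ..., g^{(m−k+1)}(x) ). -/

import Mathlib

open Finset

namespace OrderedFinpartition

variable {n : ℕ}

/-- The multiset of part sizes of an ordered finpartition. -/
def typeM (c : OrderedFinpartition n) : Multiset ℕ :=
  Finset.univ.val.map c.partSize

lemma card_typeM (c : OrderedFinpartition n) : Multiset.card c.typeM = c.length := by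
  simp [typeM]

lemma sum_partSize (c : OrderedFinpartition n) : ∑ i, c.partSize i = n := by
  have := Fintype.card_congr c.equivSigma
  simpa using this

lemma sum_typeM (c : OrderedFinpartition n) : c.typeM.sum = n := by
  rw [typeM]
  exact c.sum_partSize

lemma mem_typeM (c : OrderedFinpartition n) (k : Fin c.length) : c.partSize k ∈ c.typeM := by
  simp only [typeM, Multiset.mem_map]
  exact ⟨k, by simp, rfl⟩

lemma zero_not_mem_typeM (c : OrderedFinpartition n) : 0 ∉ c.typeM := by
  simp only [typeM, Multiset.mem_map]
  rintro ⟨i, -, h⟩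
  exact (c.partSize_pos i).ne' h

lemma map_univ_cons {N : ℕ} {α : Type*} (f : Fin N → α) (k : Fin N) :
    Finset.univ.val.map f = f k ::ₘ (Finset.univ.erase k).val.map f := by
  conv_lhs => rw [← Finset.insert_erase (Finset.mem_univ k)]
  rw [Finset.insert_val_of_notMem (Finset.notMem_erase _ _), Multiset.map_cons]

lemma typeM_extendLeft (c : OrderedFinpartition n) : c.extendLeft.typeM = 1 ::ₘ c.typeM := by
  show Finset.univ.val.map (Fin.cons 1 c.partSize) = 1 ::ₘ Finset.univ.val.map c.partSize
  rw [Fin.univ_succ, Finset.cons_val, Multiset.map_cons]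
  simp only [Fin.cons_zero, Finset.map_val, Multiset.map_map]
  congr 1

lemma typeM_extendMiddle (c : OrderedFinpartition n) (k : Fin c.length) :
    (c.extendMiddle k).typeM = (c.partSize k + 1) ::ₘ c.typeM.erase (c.partSize k) := by
  show Finset.univ.val.map (Function.update c.partSize k (c.partSize k + 1)) = _
  rw [map_univ_cons _ k, Function.update_self]
  have h1 : (Finset.univ.erase k).val.map (Function.update c.partSize k (c.partSize k + 1))
      = (Finset.univ.erase k).val.map c.partSize := by
    apply Multiset.map_congr rfl
    intro i hi
    have : i ≠ k := by
      have := Finset.mem_erase.mp (Finset.mem_val.mp hi)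
      exact this.1
    simp [Function.update_of_ne this]
  rw [h1]
  congr 1
  rw [typeM, map_univ_cons c.partSize k, Multiset.erase_cons_head]

end OrderedFinpartition

/-- The denominator in the counting formula for set partitions of a given type. -/
def Dfac (μ : Multiset ℕ) : ℕ :=
  (μ.map Nat.factorial).prod * ∏ s ∈ μ.toFinset, (μ.count s).factorial

lemma Dfac_pos (μ : Multiset ℕ) : 0 < Dfac μ := by
  apply Nat.mul_pos
  · apply Multiset.prod_pos
    intro a ha
    rcases Multiset.mem_map.mp ha with ⟨b, -, rfl⟩
    exact Nat.factorial_pos b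
  · exact Finset.prod_pos fun s _ => Nat.factorial_pos _

lemma prod_count_factorial_subset {μ : Multiset ℕ} {R : Finset ℕ} (h : μ.toFinset ⊆ R) :
    ∏ s ∈ R, (μ.count s).factorial = ∏ s ∈ μ.toFinset, (μ.count s).factorial := by
  apply (Finset.prod_subset h _).symm
  intro x _ hx
  rw [Multiset.count_eq_zero_of_notMem (by simpa using hx)]
  rfl

lemma Dfac_erase_one {μ : Multiset ℕ} (h : 1 ∈ μ) :
    Dfac μ = μ.count 1 * Dfac (μ.erase 1) := by
  have hP : (μ.map Nat.factorial).prod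
      = Nat.factorial 1 * ((μ.erase 1).map Nat.factorial).prod :=
    (Multiset.prod_map_erase (f := Nat.factorial) h).symm
  have hsub : (μ.erase 1).toFinset ⊆ μ.toFinset :=
    Multiset.toFinset_subset.mpr (Multiset.subset_of_le (Multiset.erase_le _ _))
  have h1R : 1 ∈ μ.toFinset := Multiset.mem_toFinset.mpr h
  have hQ : ∏ s ∈ μ.toFinset, (μ.count s).factorial
      = (μ.count 1).factorial * ∏ s ∈ μ.toFinset.erase 1, (μ.count s).factorial :=
    (Finset.mul_prod_erase _ _ h1R).symm
  have hQ' : ∏ s ∈ (μ.erase 1).toFinset, ((μ.erase 1).count s).factorial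
      = ((μ.erase 1).count 1).factorial
        * ∏ s ∈ μ.toFinset.erase 1, ((μ.erase 1).count s).factorial := by
    rw [← prod_count_factorial_subset hsub]
    exact (Finset.mul_prod_erase _ _ h1R).symm
  have hrest : ∏ s ∈ μ.toFinset.erase 1, ((μ.erase 1).count s).factorial
      = ∏ s ∈ μ.toFinset.erase 1, (μ.count s).factorial := by
    apply Finset.prod_congr rfl
    intro s hs
    rw [Multiset.count_erase_of_ne (Finset.mem_erase.mp hs).1]
  have hc : 0 < μ.count 1 := Multiset.count_pos.mpr h
  have hfac : (μ.count 1).factorial = μ.count 1 * (μ.count 1 - 1).factorial :=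
    (Nat.mul_factorial_pred hc.ne').symm
  rw [Dfac, Dfac, hP, hQ, hQ', hrest, Multiset.count_erase_self, hfac]
  simp only [Nat.factorial_one, one_mul]
  ring

lemma Dfac_swap {μ : Multiset ℕ} {t : ℕ} (ht : t ∈ μ) (h2 : 2 ≤ t) :
    Dfac μ * (μ.count (t - 1) + 1) = Dfac ((t - 1) ::ₘ μ.erase t) * t * μ.count t := by
  set ν := (t - 1) ::ₘ μ.erase t with hν
  have htne : t - 1 ≠ t := by omega
  have hR : μ.toFinset ⊆ insert (t - 1) μ.toFinset := Finset.subset_insert _ _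
  have hRν : ν.toFinset ⊆ insert (t - 1) μ.toFinset := by
    rw [hν, Multiset.toFinset_cons]
    apply Finset.insert_subset_insert
    exact Multiset.toFinset_subset.mpr (Multiset.subset_of_le (Multiset.erase_le _ _))
  set R := insert (t - 1) μ.toFinset with hRdef
  have ht1R : t - 1 ∈ R := Finset.mem_insert_self _ _
  have htR' : t ∈ R.erase (t - 1) :=
    Finset.mem_erase.mpr ⟨by omega, Finset.mem_insert_of_mem (Multiset.mem_toFinset.mpr ht)⟩
  -- counts
  have hν1 : ν.count (t - 1) = μ.count (t - 1) + 1 := by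
    rw [hν, Multiset.count_cons_self, Multiset.count_erase_of_ne htne]
  have hνt : ν.count t = μ.count t - 1 := by
    rw [hν, Multiset.count_cons_of_ne (Ne.symm htne), Multiset.count_erase_self]
  have hrest : ∀ s ∈ (R.erase (t - 1)).erase t, ν.count s = μ.count s := by
    intro s hs
    have hs1 : s ≠ t := (Finset.mem_erase.mp hs).1
    have hs2 : s ≠ t - 1 := (Finset.mem_erase.mp (Finset.mem_erase.mp hs).2).1
    rw [hν, Multiset.count_cons_of_ne hs2, Multiset.count_erase_of_ne hs1]
  -- Q parts
  have hQμ : ∏ s ∈ μ.toFinset, (μ.count s).factorial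
      = (μ.count (t - 1)).factorial * ((μ.count t).factorial
        * ∏ s ∈ (R.erase (t - 1)).erase t, (μ.count s).factorial) := by
    rw [← prod_count_factorial_subset hR, ← Finset.mul_prod_erase _ _ ht1R,
      ← Finset.mul_prod_erase _ _ htR']
  have hQν : ∏ s ∈ ν.toFinset, (ν.count s).factorial
      = (ν.count (t - 1)).factorial * ((ν.count t).factorial
        * ∏ s ∈ (R.erase (t - 1)).erase t, (μ.count s).factorial) := by
    rw [← prod_count_factorial_subset hRν, ← Finset.mul_prod_erase _ _ ht1R,
      ← Finset.mul_prod_erase _ _ htR']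
    congr 1
    congr 1
    exact Finset.prod_congr rfl fun s hs => by rw [hrest s hs]
  -- P parts
  have hPμ : (μ.map Nat.factorial).prod
      = t.factorial * ((μ.erase t).map Nat.factorial).prod :=
    (Multiset.prod_map_erase (f := Nat.factorial) ht).symm
  have hPν : (ν.map Nat.factorial).prod
      = (t - 1).factorial * ((μ.erase t).map Nat.factorial).prod := by
    rw [hν, Multiset.map_cons, Multiset.prod_cons]
  -- arithmetic
  have hct : 0 < μ.count t := Multiset.count_pos.mpr ht
  rw [Dfac, Dfac, hQμ, hQν, hPμ, hPν, hν1, hνt]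
  have e1 : t.factorial = t * (t - 1).factorial := (Nat.mul_factorial_pred (by omega)).symm
  have e2 : (μ.count t).factorial = μ.count t * (μ.count t - 1).factorial :=
    (Nat.mul_factorial_pred hct.ne').symm
  have e3 : (μ.count (t - 1) + 1).factorial = (μ.count (t - 1) + 1) * (μ.count (t - 1)).factorial :=
    Nat.factorial_succ _
  rw [e1, e2, e3]
  ring

open OrderedFinpartition

/-- Number of ordered finpartitions of `Fin n` with given multiset of part sizes. -/
noncomputable def Ncount (n : ℕ) (μ : Multiset ℕ) : ℕ :=
  (Finset.univ.filter fun c : OrderedFinpartition n => c.typeM = μ).card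

lemma inner_sum_eq {n : ℕ} (c : OrderedFinpartition n) (μ : Multiset ℕ) :
    (∑ k : Fin c.length, if (c.partSize k + 1) ::ₘ c.typeM.erase (c.partSize k) = μ then 1 else 0)
    = ∑ t ∈ μ.toFinset.filter (fun t => 2 ≤ t),
        (if c.typeM = (t - 1) ::ₘ μ.erase t then c.typeM.count (t - 1) else 0) := by
  classical
  set ν := c.typeM with hν
  have h0ν : (0 : ℕ) ∉ ν := c.zero_not_mem_typeM
  -- express LHS as a sum over the multiset ν
  have step1 : (∑ k : Fin c.length,
        if (c.partSize k + 1) ::ₘ ν.erase (c.partSize k) = μ then 1 else 0)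
      = (ν.map (fun s => if (s + 1) ::ₘ ν.erase s = μ then 1 else 0)).sum := by
    rw [hν, typeM, Multiset.map_map]
    rfl
  rw [step1, Finset.sum_multiset_map_count]
  simp only [smul_eq_mul, mul_ite, mul_one, mul_zero]
  rw [← Finset.sum_filter, ← Finset.sum_filter, Finset.filter_filter]
  refine Finset.sum_bij' (fun s _ => s + 1) (fun t _ => t - 1) ?_ ?_ ?_ ?_ ?_
  · -- hi
    intro s hs
    obtain ⟨hsν, hcond⟩ := Finset.mem_filter.mp hs
    have hsmem : s ∈ ν := Multiset.mem_toFinset.mp hsν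
    have hs1 : 1 ≤ s := by
      rcases Nat.eq_zero_or_pos s with h | h
      · exact absurd (h ▸ hsmem) h0ν
      · exact h
    refine Finset.mem_filter.mpr ⟨?_, by omega, ?_⟩
    · rw [Multiset.mem_toFinset, ← hcond]
      exact Multiset.mem_cons_self _ _
    · have h1 : s + 1 - 1 = s := by omega
      rw [h1, ← hcond, Multiset.erase_cons_head, Multiset.cons_erase hsmem]
  · -- hj
    intro t ht
    obtain ⟨htμ, ht2, hcond⟩ := Finset.mem_filter.mp ht
    refine Finset.mem_filter.mpr ⟨?_, ?_⟩
    · rw [Multiset.mem_toFinset, hcond]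
      exact Multiset.mem_cons_self _ _
    · have htn : t - 1 + 1 = t := by omega
      rw [htn, hcond, Multiset.erase_cons_head,
        Multiset.cons_erase (Multiset.mem_toFinset.mp htμ)]
  · -- left_inv
    intro s hs
    omega
  · -- right_inv
    intro t ht
    obtain ⟨htμ, ht2, hcond⟩ := Finset.mem_filter.mp ht
    omega
  · -- values
    intro s hs
    have h1 : s + 1 - 1 = s := by omega
    rw [h1]

theorem Ncount_mul_Dfac : ∀ (n : ℕ) (μ : Multiset ℕ), μ.sum = n → (0:ℕ) ∉ μ →
    Ncount n μ * Dfac μ = n.factorial := by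
  intro n
  induction n with
  | zero =>
    intro μ hsum h0
    have hμ : μ = 0 := by
      by_contra h
      obtain ⟨a, ha⟩ := Multiset.exists_mem_of_ne_zero h
      have : a = 0 := by
        have := Multiset.single_le_sum (fun x _ => Nat.zero_le x) a ha
        omega
      exact h0 (this ▸ ha)
    subst hμ
    have hall : ∀ c : OrderedFinpartition 0, c.typeM = 0 := by
      intro c
      have h1 := c.length_le
      have h2 := c.card_typeM
      exact Multiset.card_eq_zero.mp (by omega)
    have : Ncount 0 0 = 1 := by
      rw [Ncount, Finset.filter_true_of_mem (fun c _ => hall c)]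
      simp
    rw [this]
    simp [Dfac]
  | succ n IH =>
    intro μ hsum h0
    classical
    -- the recurrence
    have hA : ∀ ν : Multiset ℕ, (if 1 ::ₘ ν = μ then (1:ℕ) else 0)
        = if (1 ∈ μ ∧ ν = μ.erase 1) then 1 else 0 := by
      intro ν
      split_ifs with h1 h2 h3
      · rfl
      · exact absurd ⟨by rw [← h1]; exact Multiset.mem_cons_self _ _,
          by rw [← h1, Multiset.erase_cons_head]⟩ h2
      · exact absurd (by rw [h3.2, Multiset.cons_erase h3.1]) h1
      · rfl
    have hrec : Ncount (n+1) μ = ∑ c : OrderedFinpartition n,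
        ((if (1 ∈ μ ∧ c.typeM = μ.erase 1) then 1 else 0) +
         ∑ t ∈ μ.toFinset.filter (fun t => 2 ≤ t),
            (if c.typeM = (t - 1) ::ₘ μ.erase t then c.typeM.count (t - 1) else 0)) := by
      rw [Ncount, Finset.card_filter]
      have e1 : ∑ p : (Σ c : OrderedFinpartition n, Option (Fin c.length)),
          (if ((p.1.extend p.2).typeM = μ) then (1:ℕ) else 0)
          = ∑ d : OrderedFinpartition (n+1), (if d.typeM = μ then (1:ℕ) else 0) :=
        Fintype.sum_equiv (OrderedFinpartition.extendEquiv n) _ _ (fun p => rfl)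
      rw [← e1, ← Finset.univ_sigma_univ, Finset.sum_sigma]
      apply Finset.sum_congr rfl
      intro c _
      rw [Fintype.sum_option]
      congr 1
      · rw [show c.extend none = c.extendLeft from rfl, typeM_extendLeft, hA]
      · rw [← inner_sum_eq c μ]
        apply Finset.sum_congr rfl
        intro k _
        rw [show c.extend (some k) = c.extendMiddle k from rfl, typeM_extendMiddle]
    rw [hrec, Finset.sum_add_distrib]
    -- first piece
    have hfirst : (∑ c : OrderedFinpartition n,
        if (1 ∈ μ ∧ c.typeM = μ.erase 1) then (1:ℕ) else 0)
        = if 1 ∈ μ then Ncount n (μ.erase 1) else 0 := by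
      by_cases h1 : 1 ∈ μ
      · simp only [h1, true_and, if_true]
        rw [Ncount, Finset.card_filter]
      · simp [h1]
    -- second piece
    have hsecond : (∑ c : OrderedFinpartition n, ∑ t ∈ μ.toFinset.filter (fun t => 2 ≤ t),
          (if c.typeM = (t - 1) ::ₘ μ.erase t then c.typeM.count (t - 1) else 0))
        = ∑ t ∈ μ.toFinset.filter (fun t => 2 ≤ t),
            Ncount n ((t - 1) ::ₘ μ.erase t) * ((t - 1) ::ₘ μ.erase t).count (t - 1) := by
      rw [Finset.sum_comm]
      apply Finset.sum_congr rfl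
      intro t _
      have hc : ∀ c : OrderedFinpartition n,
          (if c.typeM = (t - 1) ::ₘ μ.erase t then c.typeM.count (t - 1) else 0)
          = if c.typeM = (t - 1) ::ₘ μ.erase t then ((t - 1) ::ₘ μ.erase t).count (t - 1) else 0 := by
        intro c
        split_ifs with h
        · rw [h]
        · rfl
      rw [Finset.sum_congr rfl (fun c _ => hc c), ← Finset.sum_filter, Finset.sum_const,
        smul_eq_mul, Ncount]
    rw [hfirst, hsecond, Nat.add_mul, Finset.sum_mul]
    -- evaluate each piece using IH and the Dfac ratio lemmas
    have hP1 : (if 1 ∈ μ then Ncount n (μ.erase 1) else 0) * Dfac μ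
        = (if 1 ∈ μ then μ.count 1 else 0) * n.factorial := by
      by_cases h1 : 1 ∈ μ
      · rw [if_pos h1, if_pos h1, Dfac_erase_one h1]
        have hsum' : (μ.erase 1).sum = n := by
          have := Multiset.cons_erase h1
          have h2 : μ.sum = 1 + (μ.erase 1).sum := by
            conv_lhs => rw [← this]
            rw [Multiset.sum_cons]
          omega
        have h0' : (0:ℕ) ∉ μ.erase 1 := fun h => h0 (Multiset.mem_of_mem_erase h)
        calc Ncount n (μ.erase 1) * (μ.count 1 * Dfac (μ.erase 1))
            = μ.count 1 * (Ncount n (μ.erase 1) * Dfac (μ.erase 1)) := by ring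
          _ = μ.count 1 * n.factorial := by rw [IH _ hsum' h0']
      · simp [h1]
    have hP2 : ∀ t ∈ μ.toFinset.filter (fun t => 2 ≤ t),
        Ncount n ((t - 1) ::ₘ μ.erase t) * ((t - 1) ::ₘ μ.erase t).count (t - 1) * Dfac μ
        = t * μ.count t * n.factorial := by
      intro t ht
      obtain ⟨htμ', ht2⟩ := Finset.mem_filter.mp ht
      have htμ : t ∈ μ := Multiset.mem_toFinset.mp htμ'
      have htne : (t - 1) ≠ t := by omega
      have hcount : ((t - 1) ::ₘ μ.erase t).count (t - 1) = μ.count (t - 1) + 1 := by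
        rw [Multiset.count_cons_self, Multiset.count_erase_of_ne htne]
      have hsumρ : ((t - 1) ::ₘ μ.erase t).sum = n := by
        have := Multiset.cons_erase htμ
        have h2 : μ.sum = t + (μ.erase t).sum := by
          conv_lhs => rw [← this]
          rw [Multiset.sum_cons]
        rw [Multiset.sum_cons]
        omega
      have h0ρ : (0:ℕ) ∉ (t - 1) ::ₘ μ.erase t := by
        rw [Multiset.mem_cons]
        rintro (h | h)
        · omega
        · exact h0 (Multiset.mem_of_mem_erase h)
      calc Ncount n ((t - 1) ::ₘ μ.erase t) * ((t - 1) ::ₘ μ.erase t).count (t - 1) * Dfac μ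
          = Ncount n ((t - 1) ::ₘ μ.erase t) * (Dfac μ * (μ.count (t - 1) + 1)) := by
            rw [hcount]; ring
        _ = Ncount n ((t - 1) ::ₘ μ.erase t) * (Dfac ((t - 1) ::ₘ μ.erase t) * t * μ.count t) := by
            rw [Dfac_swap htμ ht2]
        _ = (Ncount n ((t - 1) ::ₘ μ.erase t) * Dfac ((t - 1) ::ₘ μ.erase t)) * t * μ.count t := by
            ring
        _ = t * μ.count t * n.factorial := by rw [IH _ hsumρ h0ρ]; ring
    rw [hP1, Finset.sum_congr rfl hP2]
    -- final sum identity
    have hkey : (if 1 ∈ μ then μ.count 1 else 0) + ∑ t ∈ μ.toFinset.filter (fun t => 2 ≤ t),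
        t * μ.count t = n + 1 := by
      have hμsum : μ.sum = ∑ s ∈ μ.toFinset, μ.count s * s := by
        conv_lhs => rw [← Multiset.map_id μ]
        rw [Finset.sum_multiset_map_count]
        simp [smul_eq_mul]
      have hsplit := Finset.sum_filter_add_sum_filter_not μ.toFinset (fun t => 2 ≤ t)
        (fun s => μ.count s * s)
      have hsmall : μ.toFinset.filter (fun t => ¬ 2 ≤ t) = if 1 ∈ μ then {1} else ∅ := by
        split_ifs with h1
        · ext a
          simp only [Finset.mem_filter, Multiset.mem_toFinset, Finset.mem_singleton]
          constructor
          · rintro ⟨ha, ha2⟩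
            have : a ≠ 0 := fun h => h0 (h ▸ ha)
            omega
          · rintro rfl
            exact ⟨h1, by omega⟩
        · ext a
          simp only [Finset.mem_filter, Multiset.mem_toFinset, Finset.notMem_empty,
            iff_false, not_and]
          intro ha ha2
          have : a ≠ 0 := fun h => h0 (h ▸ ha)
          have : a = 1 := by omega
          exact h1 (this ▸ ha)
      have hsmallsum : ∑ s ∈ μ.toFinset.filter (fun t => ¬ 2 ≤ t), μ.count s * s
          = if 1 ∈ μ then μ.count 1 else 0 := by
        rw [hsmall]
        split_ifs with h1
        · simp
        · simp
      have : ∑ t ∈ μ.toFinset.filter (fun t => 2 ≤ t), t * μ.count t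
          = ∑ t ∈ μ.toFinset.filter (fun t => 2 ≤ t), μ.count t * t := by
        apply Finset.sum_congr rfl
        intro t _
        ring
      omega
    calc (if 1 ∈ μ then μ.count 1 else 0) * n.factorial
          + ∑ t ∈ μ.toFinset.filter (fun t => 2 ≤ t), t * μ.count t * n.factorial
        = ((if 1 ∈ μ then μ.count 1 else 0) + ∑ t ∈ μ.toFinset.filter (fun t => 2 ≤ t),
            t * μ.count t) * n.factorial := by rw [Nat.add_mul, Finset.sum_mul]
      _ = (n + 1) * n.factorial := by rw [hkey]
      _ = (n + 1).factorial := (Nat.factorial_succ n).symm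

section helpers
variable {ι α : Type*} [DecidableEq ι]

lemma card_finsum (s : Finset ι) (f : ι → Multiset α) :
    Multiset.card (∑ i ∈ s, f i) = ∑ i ∈ s, Multiset.card (f i) := by
  classical
  induction s using Finset.cons_induction with
  | empty => simp
  | cons a s ha ih => rw [Finset.sum_cons, Finset.sum_cons, ← ih]; simp

lemma sum_finsum {α : Type*} [AddCommMonoid α] (s : Finset ι) (f : ι → Multiset α) :
    (∑ i ∈ s, f i).sum = ∑ i ∈ s, (f i).sum := by
  classical
  induction s using Finset.cons_induction with
  | empty => simp
  | cons a s ha ih => rw [Finset.sum_cons, Finset.sum_cons, ← ih]; simp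

lemma map_finsum' {β : Type*} (s : Finset ι) (f : ι → Multiset α) (g : α → β) :
    (∑ i ∈ s, f i).map g = ∑ i ∈ s, (f i).map g := by
  classical
  induction s using Finset.cons_induction with
  | empty => simp
  | cons a s ha ih => rw [Finset.sum_cons, Finset.sum_cons, ← ih]; simp

lemma prod_finsum {α : Type*} [CommMonoid α] (s : Finset ι) (f : ι → Multiset α) :
    (∑ i ∈ s, f i).prod = ∏ i ∈ s, (f i).prod := by
  classical
  induction s using Finset.cons_induction with
  | empty => simp
  | cons a s ha ih => rw [Finset.sum_cons, Finset.prod_cons, ← ih]; simp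

end helpers

lemma multiset_eq_sum_replicate {L : ℕ} {μ : Multiset ℕ} (h : ∀ t ∈ μ, 1 ≤ t ∧ t ≤ L) :
    μ = ∑ i ∈ Finset.range L, Multiset.replicate (μ.count (i + 1)) (i + 1) := by
  ext a
  rw [Multiset.count_sum']
  simp only [Multiset.count_replicate]
  by_cases ha : a ∈ μ
  · obtain ⟨h1, h2⟩ := h a ha
    rw [Finset.sum_eq_single (a - 1)]
    · rw [if_pos (by omega)]
      congr 1
      omega
    · intro i _ hi
      rw [if_neg (by omega)]
    · intro hmem
      exact absurd (Finset.mem_range.mpr (by omega)) hmem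
  · rw [Multiset.count_eq_zero_of_notMem ha]
    symm
    apply Finset.sum_eq_zero
    intro i _
    split_ifs with h'
    · rw [← h'] at ha
      rw [Multiset.count_eq_zero_of_notMem ha]
    · rfl

lemma count_sum_replicate {L : ℕ} (g : ℕ → ℕ) (i₀ : ℕ) (hi₀ : i₀ ∈ Finset.range L) :
    (∑ i ∈ Finset.range L, Multiset.replicate (g i) (i + 1)).count (i₀ + 1) = g i₀ := by
  rw [Multiset.count_sum']
  simp only [Multiset.count_replicate]
  rw [Finset.sum_eq_single i₀]
  · simp
  · intro i _ hi
    rw [if_neg (by omega)]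
  · intro hmem
    exact absurd hi₀ hmem

/-- The partition of `m` underlying an ordered finpartition of `Fin m`. -/
def OrderedFinpartition.toPart {m : ℕ} (c : OrderedFinpartition m) : Nat.Partition m where
  parts := c.typeM
  parts_pos := fun hi => Nat.pos_of_ne_zero fun h => c.zero_not_mem_typeM (h ▸ hi)
  parts_sum := c.sum_typeM

lemma sum_ofp_eq_sum_partition {m : ℕ} (h : Multiset ℕ → ℝ) :
    ∑ c : OrderedFinpartition m, h c.typeM
    = ∑ P : Nat.Partition m, (Ncount m P.parts : ℝ) * h P.parts := by
  classical
  rw [← Finset.sum_fiberwise Finset.univ (fun c : OrderedFinpartition m => c.toPart)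
    (fun c => h c.typeM)]
  apply Finset.sum_congr rfl
  intro P _
  have hset : Finset.univ.filter (fun c : OrderedFinpartition m => c.toPart = P)
      = Finset.univ.filter (fun c : OrderedFinpartition m => c.typeM = P.parts) := by
    apply Finset.filter_congr
    intro c _
    constructor
    · intro hc; rw [← hc]; rfl
    · intro hc
      ext1
      exact hc
  rw [hset]
  calc ∑ c ∈ Finset.univ.filter (fun c : OrderedFinpartition m => c.typeM = P.parts), h c.typeM
      = ∑ c ∈ Finset.univ.filter (fun c : OrderedFinpartition m => c.typeM = P.parts),
          h P.parts :=
        Finset.sum_congr rfl (fun c hc => by rw [(Finset.mem_filter.mp hc).2])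
    _ = (Ncount m P.parts : ℝ) * h P.parts := by
        rw [Finset.sum_const, Ncount, nsmul_eq_mul]

lemma card_le_sum_of_pos {μ : Multiset ℕ} (h : ∀ t ∈ μ, 1 ≤ t) : Multiset.card μ ≤ μ.sum := by
  induction μ using Multiset.induction with
  | empty => simp
  | cons a s ih =>
    rw [Multiset.card_cons, Multiset.sum_cons]
    have h1 := h a (Multiset.mem_cons_self a s)
    have h2 := ih (fun t ht => h t (Multiset.mem_cons_of_mem ht))
    omega

lemma zero_not_mem_parts {m : ℕ} (P : Nat.Partition m) : (0:ℕ) ∉ P.parts :=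
  fun h => lt_irrefl 0 (P.parts_pos h)

lemma card_parts_le {m : ℕ} (P : Nat.Partition m) : Multiset.card P.parts ≤ m := by
  have := card_le_sum_of_pos (μ := P.parts) (fun t ht => P.parts_pos ht)
  rw [P.parts_sum] at this
  exact this

lemma count_parts_lt {m : ℕ} (P : Nat.Partition m) (t : ℕ) : P.parts.count t < m + 1 :=
  Nat.lt_succ_of_le (le_trans (Multiset.count_le_card _ _) (card_parts_le P))

lemma parts_le_of_card {m k : ℕ} (P : Nat.Partition m) (hcard : Multiset.card P.parts = k)
    {t : ℕ} (ht : t ∈ P.parts) : 1 ≤ t ∧ t ≤ m - k + 1 := by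
  refine ⟨P.parts_pos ht, ?_⟩
  have hre := Multiset.cons_erase ht
  have hsum : t + (P.parts.erase t).sum = m := by
    conv_rhs => rw [← P.parts_sum, ← hre]
    rw [Multiset.sum_cons]
  have hcard' : Multiset.card (P.parts.erase t) = k - 1 := by
    have : Multiset.card P.parts = Multiset.card (P.parts.erase t) + 1 := by
      conv_lhs => rw [← hre]
      rw [Multiset.card_cons]
    omega
  have hk1 : 1 ≤ k := by
    have : Multiset.card P.parts ≠ 0 := fun hc =>
      (Multiset.eq_zero_iff_forall_notMem.mp (Multiset.card_eq_zero.mp hc)) t ht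
    omega
  have hle := card_le_sum_of_pos (μ := P.parts.erase t)
    (fun s hs => P.parts_pos (Multiset.mem_of_mem_erase hs))
  omega

lemma Ncount_cast {m : ℕ} (P : Nat.Partition m) :
    (Ncount m P.parts : ℝ) = (m.factorial : ℝ) / (Dfac P.parts : ℝ) := by
  have h := Ncount_mul_Dfac m P.parts P.parts_sum (zero_not_mem_parts P)
  rw [eq_div_iff (by exact_mod_cast (Dfac_pos P.parts).ne')]
  exact_mod_cast h

section partsOf

variable {m k : ℕ}

/-- Extension of a `Fin`-indexed tuple to `ℕ`. -/
def jext (m k : ℕ) (j : Fin (m - k + 1) → Fin (m + 1)) (i : ℕ) : ℕ :=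
  if h : i < m - k + 1 then (j ⟨i, h⟩ : ℕ) else 0

lemma jext_coe (j : Fin (m - k + 1) → Fin (m + 1)) (i : Fin (m - k + 1)) :
    jext m k j (i : ℕ) = (j i : ℕ) := by
  rw [jext, dif_pos i.isLt]

/-- The multiset of parts encoded by a tuple of multiplicities. -/
def partsOf (m k : ℕ) (j : Fin (m - k + 1) → Fin (m + 1)) : Multiset ℕ :=
  ∑ i ∈ Finset.range (m - k + 1), Multiset.replicate (jext m k j i) (i + 1)

lemma card_partsOf (j : Fin (m - k + 1) → Fin (m + 1)) :
    Multiset.card (partsOf m k j) = ∑ i : Fin (m - k + 1), (j i : ℕ) := by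
  rw [partsOf, card_finsum]
  simp only [Multiset.card_replicate]
  rw [← Fin.sum_univ_eq_sum_range (fun i => jext m k j i) (m - k + 1)]
  exact Finset.sum_congr rfl fun i _ => jext_coe j i

lemma sum_partsOf (j : Fin (m - k + 1) → Fin (m + 1)) :
    (partsOf m k j).sum = ∑ i : Fin (m - k + 1), ((i : ℕ) + 1) * (j i : ℕ) := by
  rw [partsOf, sum_finsum]
  simp only [Multiset.sum_replicate, smul_eq_mul]
  rw [← Fin.sum_univ_eq_sum_range (fun i => jext m k j i * (i + 1)) (m - k + 1)]
  exact Finset.sum_congr rfl fun i _ => by rw [jext_coe j i, mul_comm]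

lemma count_partsOf (j : Fin (m - k + 1) → Fin (m + 1)) (i : Fin (m - k + 1)) :
    (partsOf m k j).count ((i : ℕ) + 1) = (j i : ℕ) := by
  rw [partsOf, count_sum_replicate _ _ (Finset.mem_range.mpr i.isLt), jext_coe]

lemma mem_partsOf {j : Fin (m - k + 1) → Fin (m + 1)} {t : ℕ} (ht : t ∈ partsOf m k j) :
    1 ≤ t := by
  rw [partsOf, Multiset.mem_sum] at ht
  obtain ⟨i, -, hmem⟩ := ht
  have := Multiset.eq_of_mem_replicate hmem
  omega

lemma prod_map_partsOf {α : Type*} [CommMonoid α] (j : Fin (m - k + 1) → Fin (m + 1))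
    (G : ℕ → α) :
    ((partsOf m k j).map G).prod = ∏ i : Fin (m - k + 1), G ((i : ℕ) + 1) ^ (j i : ℕ) := by
  rw [partsOf, map_finsum', prod_finsum]
  simp only [Multiset.map_replicate, Multiset.prod_replicate]
  rw [← Fin.prod_univ_eq_prod_range (fun i => G (i + 1) ^ jext m k j i) (m - k + 1)]
  exact Finset.prod_congr rfl fun i _ => by rw [jext_coe j i]

lemma Q_partsOf (j : Fin (m - k + 1) → Fin (m + 1)) :
    ∏ s ∈ (partsOf m k j).toFinset, ((partsOf m k j).count s).factorial
      = ∏ i : Fin (m - k + 1), ((j i : ℕ)).factorial := by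
  have hsub : (partsOf m k j).toFinset ⊆ (Finset.range (m - k + 1)).image (· + 1) := by
    intro t ht
    rw [Multiset.mem_toFinset, partsOf, Multiset.mem_sum] at ht
    obtain ⟨i, hi, hmem⟩ := ht
    rw [Finset.mem_image]
    exact ⟨i, hi, (Multiset.eq_of_mem_replicate hmem).symm⟩
  rw [← prod_count_factorial_subset hsub,
    Finset.prod_image (fun a _ b _ h => by omega)]
  rw [← Fin.prod_univ_eq_prod_range (fun i => ((partsOf m k j).count (i + 1)).factorial) (m - k + 1)]
  exact Finset.prod_congr rfl fun i _ => by rw [count_partsOf]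

end partsOf

/-- The partial Bell polynomial `B_{m,k}(x₁, …, x_{m-k+1})`: the sum over all tuples of
non-negative integers `(j₁, …, j_{m-k+1})` with `j₁ + ⋯ + j_{m-k+1} = k` and
`j₁ + 2 j₂ + ⋯ + (m-k+1) j_{m-k+1} = m` of
`(m! / (j₁! ⋯ j_{m-k+1}!)) ∏_{i=1}^{m-k+1} (x_i / i!)^{j_i}`.
The arguments are given as a function `x : ℕ → ℝ` where `x i` is the `i`-th argument;
since every admissible `jᵢ` satisfies `jᵢ ≤ m`, the tuples are indexed by
`Fin (m-k+1) → Fin (m+1)` without loss of generality. -/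
noncomputable def bellPoly (m k : ℕ) (x : ℕ → ℝ) : ℝ :=
  ∑ j ∈ Finset.univ.filter
      (fun j : Fin (m - k + 1) → Fin (m + 1) =>
        (∑ i : Fin (m - k + 1), (j i : ℕ)) = k ∧ (∑ i : Fin (m - k + 1), ((i : ℕ) + 1) * (j i : ℕ)) = m),
    ((m.factorial : ℝ) / ∏ i : Fin (m - k + 1), ((j i : ℕ).factorial : ℝ)) *
      ∏ i : Fin (m - k + 1), (x ((i : ℕ) + 1) / (Nat.factorial ((i : ℕ) + 1) : ℝ)) ^ ((j i : ℕ))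

lemma Ncount_cast' {m : ℕ} {μ : Multiset ℕ} (hsum : μ.sum = m) (h0 : (0:ℕ) ∉ μ) :
    (Ncount m μ : ℝ) = (m.factorial : ℝ) / (Dfac μ : ℝ) := by
  have h := Ncount_mul_Dfac m μ hsum h0
  rw [eq_div_iff (by exact_mod_cast (Dfac_pos μ).ne')]
  exact_mod_cast h

/-- The partition of `m` defined by a tuple of multiplicities with total weight `m`. -/
def partOfFun (m k : ℕ) (j : Fin (m - k + 1) → Fin (m + 1))
    (hw : ∑ i : Fin (m - k + 1), ((i : ℕ) + 1) * (j i : ℕ) = m) : Nat.Partition m where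
  parts := partsOf m k j
  parts_pos := fun hi => mem_partsOf hi
  parts_sum := by rw [sum_partsOf]; exact hw

lemma term_eq (m k : ℕ) (j : Fin (m - k + 1) → Fin (m + 1))
    (h1 : ∑ i : Fin (m - k + 1), (j i : ℕ) = k)
    (h2 : ∑ i : Fin (m - k + 1), ((i : ℕ) + 1) * (j i : ℕ) = m) (F G : ℕ → ℝ) :
    (Ncount m (partsOf m k j) : ℝ) *
        (F (Multiset.card (partsOf m k j)) * ((partsOf m k j).map G).prod)
    = F k * (((m.factorial : ℝ) / ∏ i : Fin (m - k + 1), ((j i : ℕ).factorial : ℝ)) *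
        ∏ i : Fin (m - k + 1), (G ((i : ℕ) + 1) / (Nat.factorial ((i : ℕ) + 1) : ℝ)) ^ (j i : ℕ)) := by
  rw [Ncount_cast' (by rw [sum_partsOf]; exact h2)
      (fun h0 => absurd (mem_partsOf h0) (by omega)),
    card_partsOf, h1, prod_map_partsOf]
  have hD : (Dfac (partsOf m k j) : ℝ)
      = (∏ i : Fin (m - k + 1), ((Nat.factorial ((i : ℕ) + 1) : ℝ)) ^ (j i : ℕ)) *
          ∏ i : Fin (m - k + 1), ((j i : ℕ).factorial : ℝ) := by
    rw [Dfac, Q_partsOf, prod_map_partsOf (α := ℕ) j Nat.factorial]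
    push_cast
    ring
  rw [hD]
  have hne1 : (∏ i : Fin (m - k + 1), ((Nat.factorial ((i : ℕ) + 1) : ℝ)) ^ (j i : ℕ)) ≠ 0 := by
    apply Finset.prod_ne_zero_iff.mpr
    intro i _
    exact pow_ne_zero _ (by exact_mod_cast (Nat.factorial_pos _).ne')
  have hne2 : (∏ i : Fin (m - k + 1), ((j i : ℕ).factorial : ℝ)) ≠ 0 := by
    apply Finset.prod_ne_zero_iff.mpr
    intro i _
    exact_mod_cast (Nat.factorial_pos _).ne'
  have hstep : ∏ i : Fin (m - k + 1), (G ((i : ℕ) + 1) / (Nat.factorial ((i : ℕ) + 1) : ℝ)) ^ (j i : ℕ)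
      = (∏ i : Fin (m - k + 1), G ((i : ℕ) + 1) ^ (j i : ℕ)) /
          ∏ i : Fin (m - k + 1), ((Nat.factorial ((i : ℕ) + 1) : ℝ)) ^ (j i : ℕ) := by
    rw [← Finset.prod_div_distrib]
    exact Finset.prod_congr rfl fun i _ => div_pow _ _ _
  rw [hstep]
  field_simp

lemma bell_side (m : ℕ) (F G : ℕ → ℝ) :
    (∑ P : Nat.Partition m, (Ncount m P.parts : ℝ) *
        (F (Multiset.card P.parts) * (P.parts.map G).prod))
      = ∑ k ∈ Finset.range (m + 1), F k * bellPoly m k G := by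
  classical
  rw [← Finset.sum_fiberwise_of_maps_to
      (g := fun P : Nat.Partition m => Multiset.card P.parts)
      (fun P _ => Finset.mem_range.mpr (Nat.lt_succ_of_le (card_parts_le P)))]
  apply Finset.sum_congr rfl
  intro k hk
  rw [bellPoly, Finset.mul_sum]
  refine Finset.sum_bij'
    (fun P _ => fun i : Fin (m - k + 1) =>
      (⟨P.parts.count ((i : ℕ) + 1), count_parts_lt P _⟩ : Fin (m + 1)))
    (fun j hj => partOfFun m k j (Finset.mem_filter.mp hj).2.2) ?_ ?_ ?_ ?_ ?_
  · -- maps into the j filter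
    intro P hP
    have hcard : Multiset.card P.parts = k := (Finset.mem_filter.mp hP).2
    have hRT : P.parts = ∑ i ∈ Finset.range (m - k + 1),
        Multiset.replicate (P.parts.count (i + 1)) (i + 1) :=
      multiset_eq_sum_replicate (fun t ht => parts_le_of_card P hcard ht)
    have h1 : ∑ i ∈ Finset.range (m - k + 1), P.parts.count (i + 1) = k := by
      have hc : ∑ i ∈ Finset.range (m - k + 1), P.parts.count (i + 1)
          = Multiset.card P.parts := by
        conv_rhs => rw [hRT]
        rw [card_finsum]
        simp
      rw [hc, hcard]
    have h2 : ∑ i ∈ Finset.range (m - k + 1), (i + 1) * P.parts.count (i + 1) = m := by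
      have : P.parts.sum = m := P.parts_sum
      conv_rhs => rw [← this, hRT]
      rw [sum_finsum]
      simp only [Multiset.sum_replicate, smul_eq_mul]
      exact Finset.sum_congr rfl fun i _ => mul_comm _ _
    refine Finset.mem_filter.mpr ⟨Finset.mem_univ _, ?_, ?_⟩
    · rw [Fin.sum_univ_eq_sum_range (fun i => P.parts.count (i + 1)) (m - k + 1)]
      exact h1
    · rw [Fin.sum_univ_eq_sum_range (fun i => (i + 1) * P.parts.count (i + 1)) (m - k + 1)]
      exact h2
  · -- maps into the P filter
    intro j hj
    refine Finset.mem_filter.mpr ⟨Finset.mem_univ _, ?_⟩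
    show Multiset.card (partsOf m k j) = k
    rw [card_partsOf]
    exact (Finset.mem_filter.mp hj).2.1
  · -- left inverse
    intro P hP
    have hcard : Multiset.card P.parts = k := (Finset.mem_filter.mp hP).2
    ext1
    show partsOf m k _ = P.parts
    have hRT : P.parts = ∑ i ∈ Finset.range (m - k + 1),
        Multiset.replicate (P.parts.count (i + 1)) (i + 1) :=
      multiset_eq_sum_replicate (fun t ht => parts_le_of_card P hcard ht)
    rw [partsOf]
    conv_rhs => rw [hRT]
    apply Finset.sum_congr rfl
    intro i hi
    rw [jext, dif_pos (Finset.mem_range.mp hi)]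
  · -- right inverse
    intro j hj
    funext i
    apply Fin.ext
    show (partsOf m k j).count ((i : ℕ) + 1) = (j i : ℕ)
    exact count_partsOf j i
  · -- values
    intro P hP
    have hcard : Multiset.card P.parts = k := (Finset.mem_filter.mp hP).2
    set j : Fin (m - k + 1) → Fin (m + 1) := fun i =>
      (⟨P.parts.count ((i : ℕ) + 1), count_parts_lt P _⟩ : Fin (m + 1)) with hjdef
    have hparts : partsOf m k j = P.parts := by
      have hRT : P.parts = ∑ i ∈ Finset.range (m - k + 1),
          Multiset.replicate (P.parts.count (i + 1)) (i + 1) :=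
        multiset_eq_sum_replicate (fun t ht => parts_le_of_card P hcard ht)
      rw [partsOf]
      conv_rhs => rw [hRT]
      apply Finset.sum_congr rfl
      intro i hi
      rw [jext, dif_pos (Finset.mem_range.mp hi)]
    have h1 : ∑ i : Fin (m - k + 1), (j i : ℕ) = k := by
      have := card_partsOf j
      rw [hparts, hcard] at this
      omega
    have h2 : ∑ i : Fin (m - k + 1), ((i : ℕ) + 1) * (j i : ℕ) = m := by
      have := sum_partsOf j
      rw [hparts, P.parts_sum] at this
      omega
    have := term_eq m k j h1 h2 F G
    rw [hparts] at this
    exact this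

lemma part1 (m : ℕ) (f g : ℝ → ℝ) (hf : ContDiff ℝ m f) (hg : ContDiff ℝ m g) (x : ℝ) :
    iteratedDeriv m (fun t => f (g t)) x =
      ∑ c : OrderedFinpartition m,
        iteratedDeriv c.length f (g x) * ∏ i, iteratedDeriv (c.partSize i) g x := by
  have hq : HasFTaylorSeriesUpTo (m : ℕ∞) f (ftaylorSeries ℝ f) := contDiff_iff_ftaylorSeries.mp hf
  have hp : HasFTaylorSeriesUpTo (m : ℕ∞) g (ftaylorSeries ℝ g) := contDiff_iff_ftaylorSeries.mp hg
  have hcomp : HasFTaylorSeriesUpToOn (m : ℕ∞) (f ∘ g)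
      (fun y => ((ftaylorSeries ℝ f) (g y)).taylorComp ((ftaylorSeries ℝ g) y)) Set.univ := by
    exact HasFTaylorSeriesUpToOn.comp (hasFTaylorSeriesUpToOn_univ_iff.mpr hq)
      (hasFTaylorSeriesUpToOn_univ_iff.mpr hp) (Set.mapsTo_univ _ _)
  have hcomp' : HasFTaylorSeriesUpTo (m : ℕ∞) (f ∘ g)
      (fun y => ((ftaylorSeries ℝ f) (g y)).taylorComp ((ftaylorSeries ℝ g) y)) :=
    hasFTaylorSeriesUpToOn_univ_iff.mp hcomp
  have key : ((ftaylorSeries ℝ f) (g x)).taylorComp ((ftaylorSeries ℝ g) x) m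
      = iteratedFDeriv ℝ m (f ∘ g) x := hcomp'.eq_iteratedFDeriv (le_refl _) x
  have : iteratedDeriv m (fun t => f (g t)) x
      = ((ftaylorSeries ℝ f) (g x)).taylorComp ((ftaylorSeries ℝ g) x) m (fun _ => (1:ℝ)) := by
    rw [key, iteratedDeriv_eq_iteratedFDeriv]; rfl
  rw [this]
  rw [FormalMultilinearSeries.taylorComp]
  rw [ContinuousMultilinearMap.sum_apply]
  apply Finset.sum_congr rfl
  intro c _
  rw [FormalMultilinearSeries.compAlongOrderedFinpartition_apply]
  have inner : c.applyOrderedFinpartition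
      (fun i => (ftaylorSeries ℝ g x) (c.partSize i)) (fun _ => (1:ℝ))
      = fun i => iteratedDeriv (c.partSize i) g x := by
    ext i
    rw [applyOrderedFinpartition_apply]
    rw [iteratedDeriv_eq_iteratedFDeriv]
    rfl
  rw [inner]
  have : (fun i => iteratedDeriv (c.partSize i) g x)
      = fun i => (iteratedDeriv (c.partSize i) g x) • (fun _ => (1:ℝ)) i := by
    ext i; simp
  rw [this, ContinuousMultilinearMap.map_smul_univ]
  simp only [smul_eq_mul, mul_one]
  rw [mul_comm, iteratedDeriv_eq_iteratedFDeriv]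
  rfl

lemma prod_partSize {n : ℕ} (c : OrderedFinpartition n) (G : ℕ → ℝ) :
    ∏ i, G (c.partSize i) = (c.typeM.map G).prod := by
  rw [OrderedFinpartition.typeM, Multiset.map_map]
  rfl

/-- **Faà di Bruno's formula in Bell polynomial form.**
If `f, g : ℝ → ℝ` are `m`-times continuously differentiable (`m ≥ 1`), then for all `x`,
`dᵐ/dxᵐ f(g(x)) = ∑_{k=0}^{m} f^{(k)}(g(x)) ⬝ B_{m,k}(g'(x), g''(x), …, g^{(m-k+1)}(x))`. -/
theorem faa_di_bruno_bell (m : ℕ) (hm : 1 ≤ m) (f g : ℝ → ℝ)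
    (hf : ContDiff ℝ m f) (hg : ContDiff ℝ m g) (x : ℝ) :
    iteratedDeriv m (fun t => f (g t)) x =
      ∑ k ∈ Finset.range (m + 1),
        iteratedDeriv k f (g x) * bellPoly m k (fun i => iteratedDeriv i g x) := by
  rw [part1 m f g hf hg x]
  have step : ∀ c : OrderedFinpartition m,
      iteratedDeriv c.length f (g x) * ∏ i, iteratedDeriv (c.partSize i) g x
      = (fun ν : Multiset ℕ => iteratedDeriv (Multiset.card ν) f (g x) *
          ((ν.map (fun i => iteratedDeriv i g x)).prod)) c.typeM := by
    intro c
    show _ = iteratedDeriv (Multiset.card c.typeM) f (g x) * _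
    rw [OrderedFinpartition.card_typeM, prod_partSize c (fun i => iteratedDeriv i g x)]
  rw [Finset.sum_congr rfl (fun c _ => step c),
    sum_ofp_eq_sum_partition (fun ν : Multiset ℕ => iteratedDeriv (Multiset.card ν) f (g x) *
        ((ν.map (fun i => iteratedDeriv i g x)).prod))]
  exact bell_side m (fun k => iteratedDeriv k f (g x)) (fun i => iteratedDeriv i g x)
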